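/- arXiv:1012.4734 — 2 statements merged into one kernel-verified Lean document; each statement's English description precedes it below -/
import Mathlib

section
/- If f : ℝ³ → ℝ is radial, satisfies f(x) = 1 - a₀/|x| for |x| ≥ R (some R > 0), and solves -Δf = 0 for |x| ≥ R, with -Δf + ½Vf = 0 on ℝ³ for compactly supported V (supp V ⊂ B_R), then ∫ V(x)f(x) dx = 8πa₀. -/
open MeasureTheory

noncomputable section

abbrev E3 : Type := EuclideanSpace ℝ (Fin 3)

noncomputable def lap (f : E3 → ℝ) (x : E3) : ℝ :=
  ∑ i : Fin 3,
    fderiv ℝ (fun y => fderiv ℝ f y (EuclideanSpace.single i (1 : ℝ))) x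
      (EuclideanSpace.single i (1 : ℝ))

namespace ScatteringAux

open Real intervalIntegral

lemma inner1D (c ρ : ℝ) (hc : 0 < c) :
    ∫ s in (-ρ)..ρ, (Real.sqrt (c^2 + s^2) ^ 3)⁻¹
      = 2*ρ / (c^2 * Real.sqrt (c^2 + ρ^2)) := by
  have key : ∀ s : ℝ, HasDerivAt (fun s : ℝ => s / (c^2 * Real.sqrt (c^2 + s^2)))
      ((Real.sqrt (c^2 + s^2) ^ 3)⁻¹) s := by
    intro s
    have hpos : 0 < c^2 + s^2 := by positivity
    have hsq : Real.sqrt (c^2 + s^2) ^ 2 = c^2 + s^2 := Real.sq_sqrt hpos.le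
    have hsqrtpos : 0 < Real.sqrt (c^2 + s^2) := Real.sqrt_pos.2 hpos
    have h1 : HasDerivAt (fun s : ℝ => c^2 + s^2) (2*s) s := by
      simpa using ((hasDerivAt_pow 2 s).const_add (c^2))
    have h2 : HasDerivAt (fun s : ℝ => Real.sqrt (c^2 + s^2))
        (2*s / (2 * Real.sqrt (c^2+s^2))) s :=
      (Real.hasDerivAt_sqrt hpos.ne').comp s h1 |>.congr_deriv (by ring)
    have h3 : HasDerivAt (fun s : ℝ => c^2 * Real.sqrt (c^2 + s^2))
        (c^2 * (2*s / (2 * Real.sqrt (c^2+s^2)))) s := h2.const_mul _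
    have h4 := (hasDerivAt_id s).div h3 (by positivity)
    convert! h4 using 1
    field_simp
    rw [id_eq]
    linear_combination (-1:ℝ) * hsq
  rw [intervalIntegral.integral_eq_sub_of_hasDerivAt (fun s _ => key s) ?_]
  · field_simp; ring
  · apply Continuous.intervalIntegrable
    have : ∀ s : ℝ, Real.sqrt (c^2 + s^2) ^ 3 ≠ 0 := by
      intro s; positivity
    exact (continuous_const.add (continuous_id.pow 2)).sqrt.pow 3 |>.inv₀ this

lemma outer1D (ρ : ℝ) (hρ : 0 < ρ) :
    ∫ t in (-ρ)..ρ, 2*ρ / ((ρ^2 + t^2) * Real.sqrt (2*ρ^2 + t^2))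
      = 2*Real.pi/(3*ρ) := by
  have key : ∀ t : ℝ, HasDerivAt (fun t : ℝ => (2/ρ) * Real.arctan (t / Real.sqrt (2*ρ^2 + t^2)))
      (2*ρ / ((ρ^2 + t^2) * Real.sqrt (2*ρ^2 + t^2))) t := by
    intro t
    have hpos : 0 < 2*ρ^2 + t^2 := by positivity
    have hsq : Real.sqrt (2*ρ^2 + t^2) ^ 2 = 2*ρ^2 + t^2 := Real.sq_sqrt hpos.le
    have hsqrtpos : 0 < Real.sqrt (2*ρ^2 + t^2) := Real.sqrt_pos.2 hpos
    have h1 : HasDerivAt (fun t : ℝ => 2*ρ^2 + t^2) (2*t) t := by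
      simpa using ((hasDerivAt_pow 2 t).const_add (2*ρ^2))
    have h2 : HasDerivAt (fun t : ℝ => Real.sqrt (2*ρ^2 + t^2))
        (2*t / (2 * Real.sqrt (2*ρ^2+t^2))) t :=
      (Real.hasDerivAt_sqrt hpos.ne').comp t h1 |>.congr_deriv (by ring)
    have h3 := (hasDerivAt_id t).div h2 hsqrtpos.ne'
    have h4 := (Real.hasDerivAt_arctan (t / Real.sqrt (2*ρ^2+t^2))).comp t h3
    have h5 := h4.const_mul (2/ρ)
    convert! h5 using 1
    simp only [id_eq, one_mul]
    field_simp
    linear_combination (-t^2) * hsq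
  rw [intervalIntegral.integral_eq_sub_of_hasDerivAt (fun t _ => key t) ?_]
  · have h3 : Real.sqrt (2*ρ^2 + ρ^2) = Real.sqrt 3 * ρ := by
      rw [show 2*ρ^2 + ρ^2 = 3 * ρ^2 by ring, Real.sqrt_mul (by norm_num), Real.sqrt_sq hρ.le]
    have harct : Real.arctan (1/Real.sqrt 3) = Real.pi/6 := by
      rw [← Real.tan_pi_div_six]
      exact Real.arctan_tan (by linarith [Real.pi_pos]) (by linarith [Real.pi_pos])
    rw [show (2*ρ^2 + (-ρ)^2 : ℝ) = 2*ρ^2 + ρ^2 by ring, h3,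
      show ρ/(Real.sqrt 3*ρ) = 1/Real.sqrt 3 by rw [mul_comm, ← div_div, div_self hρ.ne'],
      show -ρ/(Real.sqrt 3*ρ) = -(1/Real.sqrt 3) by
        rw [neg_div, mul_comm, ← div_div, div_self hρ.ne'],
      Real.arctan_neg, harct]
    field_simp
    ring
  · apply Continuous.intervalIntegrable
    apply Continuous.div continuous_const
    · exact (continuous_const.add (continuous_id.pow 2)).mul
        (continuous_const.add (continuous_id.pow 2)).sqrt
    · intro t; positivity

lemma twoD (ρ : ℝ) (hρ : 0 < ρ) :
    ∫ y in Set.Icc (fun _ => -ρ : Fin 2 → ℝ) (fun _ => ρ),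
      (Real.sqrt (ρ^2 + ((y 0)^2 + (y 1)^2)) ^ 3)⁻¹ = 2*Real.pi/(3*ρ) := by
  have hcont : Continuous (fun p : ℝ × ℝ => (Real.sqrt (ρ^2 + (p.1^2 + p.2^2)) ^ 3)⁻¹) := by
    apply Continuous.inv₀
    · exact ((continuous_const.add ((continuous_fst.pow 2).add (continuous_snd.pow 2))).sqrt.pow 3)
    · intro p; positivity
  have hpre : (Set.Icc (fun _ => -ρ) (fun _ => ρ) : Set (Fin 2 → ℝ))
      = (MeasurableEquiv.finTwoArrow : (Fin 2 → ℝ) ≃ᵐ (ℝ × ℝ)) ⁻¹' (Set.Icc (-ρ,-ρ) (ρ,ρ)) := by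
    ext x
    simp [MeasurableEquiv.finTwoArrow, Pi.le_def, Prod.le_def, Fin.forall_fin_two]
  rw [hpre]
  erw [(volume_preserving_finTwoArrow ℝ).setIntegral_preimage_emb
      (MeasurableEquiv.finTwoArrow).measurableEmbedding
      (fun p : ℝ × ℝ => (Real.sqrt (ρ^2 + (p.1^2 + p.2^2)) ^ 3)⁻¹) _]
  rw [show (Set.Icc ((-ρ,-ρ) : ℝ × ℝ) (ρ,ρ)) = Set.Icc (-ρ) ρ ×ˢ Set.Icc (-ρ) ρ from Set.Icc_prod_eq _ _]
  rw [MeasureTheory.Measure.volume_eq_prod]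
  rw [MeasureTheory.setIntegral_prod _ (hcont.continuousOn.integrableOn_compact (isCompact_Icc.prod isCompact_Icc))]
  have hinner : ∀ x : ℝ, ∫ y in Set.Icc (-ρ) ρ, (Real.sqrt (ρ^2 + (x^2 + y^2)) ^ 3)⁻¹
      = 2*ρ/((ρ^2+x^2) * Real.sqrt (2*ρ^2 + x^2)) := by
    intro x
    have h := inner1D (Real.sqrt (ρ^2+x^2)) ρ (by positivity)
    rw [Real.sq_sqrt (by positivity)] at h
    rw [show ρ^2+x^2+ρ^2 = 2*ρ^2+x^2 by ring] at h
    rw [MeasureTheory.integral_Icc_eq_integral_Ioc, ← intervalIntegral.integral_of_le (by linarith)]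
    rw [← h]
    congr 1; ext s; rw [add_assoc]
  calc ∫ x in Set.Icc (-ρ) ρ, ∫ y in Set.Icc (-ρ) ρ, (Real.sqrt (ρ^2 + (x^2 + y^2)) ^ 3)⁻¹
      = ∫ x in Set.Icc (-ρ) ρ, 2*ρ/((ρ^2+x^2) * Real.sqrt (2*ρ^2 + x^2)) := by
        exact setIntegral_congr_fun measurableSet_Icc (fun x _ => hinner x)
    _ = 2*Real.pi/(3*ρ) := by
        rw [MeasureTheory.integral_Icc_eq_integral_Ioc, ← intervalIntegral.integral_of_le (by linarith)]
        exact outer1D ρ hρ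

lemma grad_out (a₀ : ℝ) (x : E3) (hx : x ≠ 0) :
    HasFDerivAt (fun z : E3 => 1 - a₀ * ‖z‖⁻¹)
      ((a₀ * (‖x‖^3)⁻¹) • (innerSL ℝ x)) x := by
  have hnx : 0 < ‖x‖ := norm_pos_iff.2 hx
  have h1 : HasFDerivAt (fun z : E3 => ‖z‖ ^ 2)
      (2 • (innerSL ℝ) x) x := (hasStrictFDerivAt_norm_sq x).hasFDerivAt
  have h2 : HasFDerivAt (fun z : E3 => ‖z‖)
      ((‖x‖⁻¹) • (innerSL ℝ x)) x := by
    have := (hasDerivAt_sqrt (by positivity : ‖x‖^2 ≠ 0)).comp_hasFDerivAt x h1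
    have heq : (fun z : E3 => Real.sqrt (‖z‖^2)) = fun z => ‖z‖ := by
      funext z; exact Real.sqrt_sq (norm_nonneg z)
    rw [Function.comp_def, heq] at this
    convert! this using 1
    rw [Real.sqrt_sq hnx.le]
    match_scalars
    field_simp
  have h3 : HasFDerivAt (fun z : E3 => ‖z‖⁻¹)
      ((-(‖x‖^3)⁻¹) • (innerSL ℝ x)) x := by
    have := (hasDerivAt_inv hnx.ne').comp_hasFDerivAt x h2
    rw [Function.comp_def] at this
    convert! this using 1
    rw [smul_smul]
    congr 1
    field_simp
  have h4 := (h3.const_mul a₀).const_sub 1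
  convert! h4 using 1
  match_scalars
  field_simp

lemma gradApplySingle (a₀ : ℝ) (x : E3) (i : Fin 3) :
    ((a₀ * (‖x‖^3)⁻¹) • (innerSL ℝ x)) (EuclideanSpace.single i (1:ℝ))
      = a₀ * (‖x‖^3)⁻¹ * x i := by
  simp [EuclideanSpace.inner_single_right]

noncomputable def eS : (Fin 3 → ℝ) ≃L[ℝ] E3 := (EuclideanSpace.equiv (Fin 3) ℝ).symm

end ScatteringAux

open ScatteringAux

/-- If `f` is radial, equals `1 - a₀/|x|` (and is harmonic) for `|x| ≥ R`, and solves the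
zero-energy scattering equation `(-Δ + ½V)f = 0` on `ℝ³` for a bounded potential `V`
supported in `B_R`, then `∫ V f = 8π a₀`. -/
theorem scattering_length_formula (R a₀ : ℝ) (hR : 0 < R)
    (V f : E3 → ℝ) (hVmeas : Measurable V) (C : ℝ) (hVbdd : ∀ x, |V x| ≤ C)
    (hVsupp : ∀ x : E3, R ≤ ‖x‖ → V x = 0)
    (hfrad : ∀ x y : E3, ‖x‖ = ‖y‖ → f x = f y)
    (hf : ContDiff ℝ 2 f)
    (hscatt : ∀ x : E3, -lap f x + (1 / 2) * V x * f x = 0)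
    (hout : ∀ x : E3, R ≤ ‖x‖ → f x = 1 - a₀ / ‖x‖) :
    ∫ x : E3, V x * f x = 8 * Real.pi * a₀ := by
  classical
  set ρ : ℝ := R + 1 with hρdef
  have hρR : R < ρ := by simp [hρdef]
  have hρ0 : 0 < ρ := by linarith
  set a : Fin 3 → ℝ := (fun _ => -ρ) with hadef
  set b : Fin 3 → ℝ := (fun _ => ρ) with hbdef
  have hle : a ≤ b := fun i => by simp only [hadef, hbdef]; linarith
  set D1 : Fin 3 → E3 → ℝ :=
    fun i z => fderiv ℝ f z (EuclideanSpace.single i (1:ℝ)) with hD1def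
  have hD1 : ∀ i, ContDiff ℝ 1 (D1 i) :=
    fun i => (hf.fderiv_right (by norm_num)).clm_apply contDiff_const
  set F : Fin 3 → (Fin 3 → ℝ) → ℝ := fun i y => D1 i (eS y) with hFdef
  set F' : Fin 3 → (Fin 3 → ℝ) → (Fin 3 → ℝ) →L[ℝ] ℝ :=
    fun i y => (fderiv ℝ (D1 i) (eS y)).comp (eS.toContinuousLinearMap) with hF'def
  have hFc : ∀ i, Continuous (F i) :=
    fun i => (((hD1 i).continuous).comp eS.continuous)
  have hFd : ∀ (y : Fin 3 → ℝ) (i : Fin 3), HasFDerivAt (F i) (F' i y) y := by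
    intro y i
    exact (((hD1 i).differentiable one_ne_zero (eS y)).hasFDerivAt).comp y
      eS.toContinuousLinearMap.hasFDerivAt
  have hdiv : ∀ y : Fin 3 → ℝ,
      (∑ i, F' i y (Pi.single i 1)) = (1/2) * (V (eS y) * f (eS y)) := by
    intro y
    have h1 : (∑ i, F' i y (Pi.single i 1)) = lap f (eS y) := rfl
    rw [h1]
    have := hscatt (eS y); linarith
  have hdivcont : Continuous fun y : Fin 3 → ℝ => ∑ i, F' i y (Pi.single i 1) := by
    apply continuous_finset_sum
    intro i _
    have h1 : Continuous (fderiv ℝ (D1 i)) := ((hD1 i).fderiv_right (by norm_num : (0:WithTop ℕ∞)+1 ≤ 1)).continuous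
    have h2 : (fun y : Fin 3 → ℝ => F' i y (Pi.single i 1))
        = fun y => (ContinuousLinearMap.apply ℝ ℝ (EuclideanSpace.single i (1:ℝ)))
            (fderiv ℝ (D1 i) (eS y)) := rfl
    rw [h2]
    exact (ContinuousLinearMap.apply ℝ ℝ _).continuous.comp (h1.comp eS.continuous)
  have hdivthm := MeasureTheory.integral_divergence_of_hasFDerivAt_off_countable'
    a b hle F F' ∅ Set.countable_empty (fun i => (hFc i).continuousOn)
    (fun x _ i => hFd x i)
    ((hdivcont.continuousOn).integrableOn_compact isCompact_Icc)
  -- LHS : equals (1/2) ∫ V f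
  have h0 : ∀ y ∉ Set.Icc a b, V (eS y) * f (eS y) = 0 := by
    intro y hy
    have hex : ∃ i, ρ < |y i| := by
      by_contra h; push_neg at h
      exact hy ⟨fun i => by have := (abs_le.1 (h i)).1; simpa [hadef] using this,
                fun i => by have := (abs_le.1 (h i)).2; simpa [hbdef] using this⟩
    obtain ⟨i, hi⟩ := hex
    have h1 : |y i| ≤ ‖eS y‖ := by
      rw [EuclideanSpace.norm_eq]
      rw [show |y i| = Real.sqrt (‖(eS y) i‖^2) by
        rw [Real.sqrt_sq_eq_abs, Real.norm_eq_abs, abs_abs]; exact rfl]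
      apply Real.sqrt_le_sqrt
      exact Finset.single_le_sum (f := fun j => ‖(eS y) j‖^2)
        (fun j _ => by positivity) (Finset.mem_univ i)
    have : R ≤ ‖eS y‖ := by linarith
    rw [hVsupp _ this, zero_mul]
  have key1 : ∫ y in Set.Icc a b, (1/2 : ℝ) * (V (eS y) * f (eS y))
      = (1/2) * ∫ x : E3, V x * f x := by
    rw [integral_const_mul]
    congr 1
    rw [MeasureTheory.setIntegral_eq_integral_of_forall_compl_eq_zero h0]
    have h2 := (EuclideanSpace.volume_preserving_symm_measurableEquiv_toLp (Fin 3)).integral_comp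
      (MeasurableEquiv.toLp 2 (Fin 3 → ℝ)).symm.measurableEmbedding
      (fun y => V (eS y) * f (eS y))
    rw [← h2]
    exact rfl
  have hL : ∫ y in Set.Icc a b, ∑ i, F' i y (Pi.single i 1)
      = (1/2) * ∫ x : E3, V x * f x := by
    rw [MeasureTheory.setIntegral_congr_fun measurableSet_Icc (fun y _ => hdiv y)]
    exact key1
  -- Face computation
  have hface : ∀ (i : Fin 3) (c : ℝ), c^2 = ρ^2 → ∀ y : Fin 2 → ℝ,
      F i (i.insertNth c y)
        = (a₀ * c) * (Real.sqrt (ρ^2 + ((y 0)^2 + (y 1)^2)) ^ 3)⁻¹ := by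
    intro i c hc y
    set w : Fin 3 → ℝ := i.insertNth c y with hwdef
    set z : E3 := eS w with hzdef
    have happ : ∀ j : Fin 3, z j = w j := fun j => rfl
    have hzn : ‖z‖ = Real.sqrt (ρ^2 + ((y 0)^2 + (y 1)^2)) := by
      rw [EuclideanSpace.norm_eq]
      congr 1
      rw [Fin.sum_univ_succAbove (fun j => ‖z j‖^2) i]
      have hzi : ‖z i‖^2 = ρ^2 := by
        rw [happ i, hwdef, Fin.insertNth_apply_same, Real.norm_eq_abs, sq_abs, hc]
      have hzj : ∀ j : Fin 2, ‖z (i.succAbove j)‖^2 = (y j)^2 := by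
        intro j
        rw [happ (i.succAbove j), hwdef, Fin.insertNth_apply_succAbove, Real.norm_eq_abs, sq_abs]
      rw [hzi]
      congr 1
      rw [Fin.sum_univ_two (fun j => ‖z (i.succAbove j)‖^2), hzj 0, hzj 1]
    have hρlez : ρ ≤ ‖z‖ := by
      have h := Real.sqrt_le_sqrt (show ρ^2 ≤ ρ^2 + ((y 0)^2 + (y 1)^2) by nlinarith [sq_nonneg (y 0), sq_nonneg (y 1)])
      rw [Real.sqrt_sq hρ0.le] at h
      rw [hzn]; exact h
    have hzR : R < ‖z‖ := lt_of_lt_of_le hρR hρlez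
    have hz0 : z ≠ 0 := by
      intro h
      rw [h, norm_zero] at hzR
      linarith
    have hev : f =ᶠ[nhds z] (fun w : E3 => 1 - a₀ * ‖w‖⁻¹) := by
      have hopen : IsOpen {w : E3 | R < ‖w‖} := isOpen_lt continuous_const continuous_norm
      filter_upwards [hopen.mem_nhds hzR] with w hw
      rw [hout w (le_of_lt hw), div_eq_mul_inv]
    have hfd : HasFDerivAt f ((a₀ * (‖z‖^3)⁻¹) • (innerSL ℝ z)) z :=
      (grad_out a₀ z hz0).congr_of_eventuallyEq hev
    have hFi : F i w = fderiv ℝ f z (EuclideanSpace.single i (1:ℝ)) := rfl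
    rw [hFi, hfd.fderiv, gradApplySingle a₀ z i]
    have hzi : z i = c := by
      rw [happ i, hwdef, Fin.insertNth_apply_same]
    rw [hzi, hzn]
    ring
  have hfacesum : ∀ i : Fin 3,
      ((∫ y in Set.Icc (a ∘ i.succAbove) (b ∘ i.succAbove), F i (i.insertNth (b i) y))
        - ∫ y in Set.Icc (a ∘ i.succAbove) (b ∘ i.succAbove), F i (i.insertNth (a i) y))
      = 4 * Real.pi * a₀ / 3 := by
    intro i
    have haS : a ∘ i.succAbove = (fun _ : Fin 2 => -ρ) := rfl
    have hbS : b ∘ i.succAbove = (fun _ : Fin 2 => ρ) := rfl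
    have hbi : b i = ρ := rfl
    have hai : a i = -ρ := rfl
    rw [haS, hbS, hbi, hai]
    rw [MeasureTheory.setIntegral_congr_fun measurableSet_Icc
        (fun y _ => hface i ρ rfl y),
      MeasureTheory.setIntegral_congr_fun measurableSet_Icc
        (fun y _ => hface i (-ρ) (by ring) y)]
    rw [integral_const_mul, integral_const_mul, twoD ρ hρ0]
    field_simp
    ring
  rw [hL] at hdivthm
  rw [Finset.sum_congr rfl (fun i _ => hfacesum i)] at hdivthm
  simp only [Finset.sum_const, Finset.card_univ, Fintype.card_fin, nsmul_eq_mul] at hdivthm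
  push_cast at hdivthm
  linarith

end
end

section
/- For any nonnegative trace-class operator γ on H and unit vector φ, the trace norm satisfies ‖γ - |φ⟩⟨φ|‖₁ ≤ 2·√(Tr γ) · √(Tr γ - ⟨φ, γφ⟩) + |Tr γ - 1|; in particular, if Tr γ = 1 then 1 - ⟨φ, γφ⟩ → 0 implies γ → |φ⟩⟨φ| in trace norm with explicit rate ‖γ - |φ⟩⟨φ|‖₁ ≤ 2√(1 - ⟨φ,γφ⟩). -/
open MeasureTheory Filter ENNReal
open scoped InnerProductSpace

set_option linter.unusedSectionVars false
set_option linter.unnecessarySeqFocus false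
set_option linter.unusedVariables false
noncomputable section

variable {H : Type*} [NormedAddCommGroup H] [InnerProductSpace ℂ H] [CompleteSpace H]

/-- The rank-one projection `|φ⟩⟨φ| : x ↦ ⟨φ, x⟩ φ`. -/
noncomputable def projOp (φ : H) : H →L[ℂ] H :=
  (innerSL ℂ φ).smulRight φ

/-- Trace norm, as a supremum over finite orthonormal systems. -/
noncomputable def traceNorm (A : H →L[ℂ] H) : ℝ≥0∞ :=
  ⨆ (n : ℕ) (e : Fin n → H) (f : Fin n → H)
    (_ : Orthonormal ℂ e) (_ : Orthonormal ℂ f),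
    ENNReal.ofReal (∑ i, ‖⟪e i, A (f i)⟫_ℂ‖)

/-- Trace of a nonnegative operator, as a supremum over finite orthonormal systems. -/
noncomputable def opTrace (A : H →L[ℂ] H) : ℝ≥0∞ :=
  ⨆ (n : ℕ) (e : Fin n → H) (_ : Orthonormal ℂ e),
    ENNReal.ofReal (∑ i, (⟪e i, A (e i)⟫_ℂ).re)

private lemma projOp_apply (φ x : H) : projOp φ x = ⟪φ, x⟫_ℂ • φ := rfl

private lemma isSelfAdjoint_projOp (φ : H) : IsSelfAdjoint (projOp φ) := by
  rw [ContinuousLinearMap.isSelfAdjoint_iff_isSymmetric]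
  intro x y
  simp only [ContinuousLinearMap.coe_coe, projOp_apply, inner_smul_left, inner_smul_right,
    inner_conj_symm]
  ring

private lemma inner_projOp_self (φ x : H) :
    ⟪x, projOp φ x⟫_ℂ = (‖⟪φ, x⟫_ℂ‖ ^ 2 : ℝ) := by
  rw [projOp_apply, inner_smul_right, ← inner_conj_symm x φ, Complex.mul_conj']
  norm_cast

private lemma pos_inner_nonneg {B : H →L[ℂ] H} (hB : 0 ≤ B) (x : H) :
    0 ≤ (⟪x, B x⟫_ℂ).re := by
  have := ((ContinuousLinearMap.nonneg_iff_isPositive B).1 hB).inner_nonneg_right x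
  simpa using (Complex.nonneg_iff.1 this).1

private lemma sum_re_le_opTrace (γ : H →L[ℂ] H) (hγtr : opTrace γ ≠ ⊤) {n : ℕ}
    {e : Fin n → H} (he : Orthonormal ℂ e) :
    ∑ i, (⟪e i, γ (e i)⟫_ℂ).re ≤ (opTrace γ).toReal := by
  have h1 : ENNReal.ofReal (∑ i, (⟪e i, γ (e i)⟫_ℂ).re) ≤ opTrace γ :=
    le_iSup_of_le n <| le_iSup_of_le e <| le_iSup_of_le he le_rfl
  exact (ENNReal.ofReal_le_iff_le_toReal hγtr).1 h1

private lemma sqrt_inner_eq {B : H →L[ℂ] H} (hB : 0 ≤ B) (x y : H) :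
    ⟪x, B y⟫_ℂ = ⟪CFC.sqrt B x, CFC.sqrt B y⟫_ℂ := by
  set C := CFC.sqrt B with hCdef
  have hC : 0 ≤ C := CFC.sqrt_nonneg B
  have hCsa : ContinuousLinearMap.adjoint C = C :=
    ContinuousLinearMap.isSelfAdjoint_iff'.1
      ((ContinuousLinearMap.nonneg_iff_isPositive C).1 hC).isSelfAdjoint
  have hCC : C * C = B := CFC.sqrt_mul_sqrt_self B hB
  have h2 := ContinuousLinearMap.adjoint_inner_right C x (C y)
  rw [hCsa] at h2
  conv_lhs => rw [← hCC]
  rw [ContinuousLinearMap.mul_apply]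
  exact h2

private lemma norm_sqrt_apply {B : H →L[ℂ] H} (hB : 0 ≤ B) (x : H) :
    ‖CFC.sqrt B x‖ = Real.sqrt (⟪x, B x⟫_ℂ).re := by
  rw [sqrt_inner_eq hB x x]
  have h : (⟪CFC.sqrt B x, CFC.sqrt B x⟫_ℂ).re = ‖CFC.sqrt B x‖ ^ 2 := by
    have := inner_self_eq_norm_sq (𝕜 := ℂ) (CFC.sqrt B x)
    simpa using this
  rw [h, Real.sqrt_sq (norm_nonneg _)]

private lemma cs_pos {B : H →L[ℂ] H} (hB : 0 ≤ B) (x y : H) :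
    ‖⟪x, B y⟫_ℂ‖ ≤ Real.sqrt (⟪x, B x⟫_ℂ).re * Real.sqrt (⟪y, B y⟫_ℂ).re := by
  rw [sqrt_inner_eq hB x y, ← norm_sqrt_apply hB x, ← norm_sqrt_apply hB y]
  exact norm_inner_le_norm _ _

private lemma cs_pos_sum {B : H →L[ℂ] H} (hB : 0 ≤ B) {n : ℕ} (e f : Fin n → H) :
    ∑ i, ‖⟪e i, B (f i)⟫_ℂ‖ ≤
      Real.sqrt (∑ i, (⟪e i, B (e i)⟫_ℂ).re) * Real.sqrt (∑ i, (⟪f i, B (f i)⟫_ℂ).re) := by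
  have h1 : ∑ i, ‖⟪e i, B (f i)⟫_ℂ‖ ≤
      ∑ i, Real.sqrt (⟪e i, B (e i)⟫_ℂ).re * Real.sqrt (⟪f i, B (f i)⟫_ℂ).re :=
    Finset.sum_le_sum fun i _ => cs_pos hB _ _
  refine h1.trans ?_
  have h2 := Finset.sum_mul_sq_le_sq_mul_sq Finset.univ
    (fun i => Real.sqrt (⟪e i, B (e i)⟫_ℂ).re) (fun i => Real.sqrt (⟪f i, B (f i)⟫_ℂ).re)
  have h3 : ∀ i : Fin n, (Real.sqrt (⟪e i, B (e i)⟫_ℂ).re) ^ 2 = (⟪e i, B (e i)⟫_ℂ).re :=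
    fun i => Real.sq_sqrt (pos_inner_nonneg hB _)
  have h4 : ∀ i : Fin n, (Real.sqrt (⟪f i, B (f i)⟫_ℂ).re) ^ 2 = (⟪f i, B (f i)⟫_ℂ).re :=
    fun i => Real.sq_sqrt (pos_inner_nonneg hB _)
  simp only [h3, h4] at h2
  have h5 : 0 ≤ ∑ i, Real.sqrt (⟪e i, B (e i)⟫_ℂ).re * Real.sqrt (⟪f i, B (f i)⟫_ℂ).re :=
    Finset.sum_nonneg fun i _ => mul_nonneg (Real.sqrt_nonneg _) (Real.sqrt_nonneg _)
  rw [← Real.sqrt_mul_self h5]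
  rw [← Real.sqrt_mul (Finset.sum_nonneg fun i _ => pos_inner_nonneg hB _)]
  exact Real.sqrt_le_sqrt (by nlinarith [h2])

private lemma apply_eq_zero_of_inner_zero {B : H →L[ℂ] H} (hB : 0 ≤ B) {z : H}
    (h : (⟪z, B z⟫_ℂ).re = 0) : B z = 0 := by
  have h1 : CFC.sqrt B z = 0 := by
    have := norm_sqrt_apply hB z
    rw [h, Real.sqrt_zero] at this
    exact norm_eq_zero.1 this
  have hCC : CFC.sqrt B * CFC.sqrt B = B := CFC.sqrt_mul_sqrt_self B hB
  have : B z = CFC.sqrt B (CFC.sqrt B z) := by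
    conv_lhs => rw [← hCC]
    rw [ContinuousLinearMap.mul_apply]
  rw [this, h1, map_zero]

private lemma orthonormal_single {φ : H} (hφ : ‖φ‖ = 1) : Orthonormal ℂ ![φ] := by
  rw [orthonormal_iff_ite]
  intro i j
  fin_cases i <;> fin_cases j <;>
    simp [inner_self_eq_norm_sq_to_K, hφ]

private lemma orthonormal_pair {φ χ : H} (hφ : ‖φ‖ = 1) (hχ : ‖χ‖ = 1)
    (hor : ⟪φ, χ⟫_ℂ = 0) : Orthonormal ℂ ![φ, χ] := by
  have hor' : ⟪χ, φ⟫_ℂ = 0 := by rw [← inner_conj_symm, hor, map_zero]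
  rw [orthonormal_iff_ite]
  intro i j
  fin_cases i <;> fin_cases j <;>
    simp [inner_self_eq_norm_sq_to_K, hφ, hχ, hor, hor']

private lemma orthonormal_snoc {n : ℕ} {e : Fin n → H} (he : Orthonormal ℂ e)
    {v : H} (hv : ‖v‖ = 1) (hov : ∀ i, ⟪e i, v⟫_ℂ = 0) :
    Orthonormal ℂ (Fin.snoc e v) := by
  have hov' : ∀ i, ⟪v, e i⟫_ℂ = 0 := fun i => by
    rw [← inner_conj_symm, hov, map_zero]
  rw [orthonormal_iff_ite] at he ⊢
  intro i j
  refine Fin.lastCases ?_ (fun i' => ?_) i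
  · refine Fin.lastCases ?_ (fun j' => ?_) j
    · simp [inner_self_eq_norm_sq_to_K, hv]
    · simp [Fin.snoc_castSucc, Fin.snoc_last, hov', (Fin.castSucc_lt_last j').ne']
  · refine Fin.lastCases ?_ (fun j' => ?_) j
    · simp [Fin.snoc_castSucc, Fin.snoc_last, hov, (Fin.castSucc_lt_last i').ne]
    · simp only [Fin.snoc_castSucc, he i' j', Fin.castSucc_inj]
private lemma scalar_mu_bound {x y u s r q : ℝ}
    (hx : 0 ≤ x) (hy : 0 ≤ y) (hu : 0 ≤ u) (hs : 0 ≤ s) (hr : 0 ≤ r) (hq : 0 ≤ q)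
    (hxy : x^2 + y^2 = 1) (hT : s^2 + r^2 = q^2) (hu_le : u ≤ y * r) :
    x^2 - (x*s - u)^2 ≤ q * r + max (1 - q^2) 0 := by
  have hmax1 : x^2 * (1 - q^2) ≤ max (1 - q^2) 0 := by
    rcases le_total 0 (1 - q^2) with h | h
    · calc x^2 * (1 - q^2) ≤ 1 * (1 - q^2) := by nlinarith
      _ ≤ max (1 - q^2) 0 := by rw [one_mul]; exact le_max_left _ _
    · calc x^2 * (1 - q^2) ≤ 0 := mul_nonpos_of_nonneg_of_nonpos (sq_nonneg x) h
      _ ≤ max (1 - q^2) 0 := le_max_right _ _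
  rcases le_total (x * s) (y * r) with hc | hc
  · -- u can be as large as xs; bound by x^2, then x^2 ≤ q*r + max
    have h1 : x^2 - (x*s - u)^2 ≤ x^2 := by nlinarith [sq_nonneg (x*s - u)]
    have hsq : (x*s)*(x*s) ≤ (y*r)*(y*r) := mul_self_le_mul_self (mul_nonneg hx hs) hc
    have hx2q : x^2 * q^2 ≤ r^2 := by nlinarith [hsq]
    have hrq : r ≤ q := by
      have h2 : r^2 ≤ q^2 := by nlinarith
      calc r = |r| := (abs_of_nonneg hr).symm
      _ = Real.sqrt (r^2) := (Real.sqrt_sq_eq_abs r).symm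
      _ ≤ Real.sqrt (q^2) := Real.sqrt_le_sqrt h2
      _ = q := by rw [Real.sqrt_sq hq]
    refine h1.trans ?_
    rcases le_total 1 (q^2) with h | h
    · have : x^2 ≤ q * r := by nlinarith
      have h0 : max (1 - q^2) 0 = 0 := max_eq_right (by linarith)
      linarith
    · have : x^2 ≤ r^2 + (1 - q^2) := by nlinarith
      have h2 : r^2 ≤ q * r := by nlinarith
      have h3 : (1 - q^2) ≤ max (1 - q^2) 0 := le_max_left _ _
      linarith
  · -- u ≤ y*r ≤ x*s
    have hmono : x^2 - (x*s - u)^2 ≤ x^2 - (x*s - y*r)^2 := by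
      nlinarith [mul_nonneg hy hr]
    refine hmono.trans ?_
    set L := r * (x^2 - y^2) + s * (2*x*y) with hL
    have hab : (x^2 - y^2)^2 + (2*x*y)^2 = 1 := by
      have h : (x^2 - y^2)^2 + (2*x*y)^2 = (x^2 + y^2)^2 := by ring
      rw [h, hxy, one_pow]
    have key : L^2 + (s*(x^2-y^2) - r*(2*x*y))^2
        = (s^2 + r^2) * ((x^2-y^2)^2 + (2*x*y)^2) := by rw [hL]; ring
    rw [hab, hT, mul_one] at key
    have hL2 : L^2 ≤ q^2 := by nlinarith [sq_nonneg (s*(x^2-y^2) - r*(2*x*y)), key]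
    have hLq : L ≤ q := by
      calc L ≤ |L| := le_abs_self L
      _ = Real.sqrt (L^2) := (Real.sqrt_sq_eq_abs L).symm
      _ ≤ Real.sqrt (q^2) := Real.sqrt_le_sqrt hL2
      _ = q := by rw [Real.sqrt_sq hq]
    have hkey : x^2 - (x*s - y*r)^2 = r * L + x^2 * (1 - q^2) := by
      rw [hL]
      have hq2 : q^2 = s^2 + r^2 := hT.symm
      rw [hq2]; ring
    have hrL : r * L ≤ q * r := by
      have := mul_le_mul_of_nonneg_left hLq hr
      linarith [this]
    linarith [hmax1, hkey.le, hkey.ge]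

private lemma final_combine {T Q μ : ℝ} (hQ : 0 ≤ Q) (hμ0 : 0 ≤ μ)
    (hμ : μ ≤ Q + max (1 - T) 0) :
    max ((T - 1) + μ) 0 + μ ≤ 2 * Q + |T - 1| := by
  rcases le_total 1 T with h | h
  · have h1 : max (1 - T) 0 = 0 := max_eq_right (by linarith)
    have h2 : |T - 1| = T - 1 := abs_of_nonneg (by linarith)
    have h3 : max ((T - 1) + μ) 0 ≤ (T - 1) + Q := by
      apply max_le <;> [linarith [hμ, h1.le]; linarith]
    rw [h2]; rw [h1] at hμ; linarith
  · have h1 : max (1 - T) 0 = 1 - T := max_eq_left (by linarith)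
    have h2 : |T - 1| = 1 - T := by rw [abs_of_nonpos (by linarith)]; ring
    have h3 : max ((T - 1) + μ) 0 ≤ Q := by
      apply max_le <;> [linarith [hμ, h1.le]; linarith]
    rw [h2]; rw [h1] at hμ; linarith

private lemma pair_bound (γ : H →L[ℂ] H) (hγtr : opTrace γ ≠ ⊤)
    {φ χ : H} (hφ : ‖φ‖ = 1) (hχ : ‖χ‖ = 1) (hor : ⟪φ, χ⟫_ℂ = 0) :
    (⟪φ, γ φ⟫_ℂ).re + (⟪χ, γ χ⟫_ℂ).re ≤ (opTrace γ).toReal := by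
  have h := sum_re_le_opTrace γ hγtr (orthonormal_pair hφ hχ hor)
  simpa [Fin.sum_univ_two] using h

private lemma single_bound (γ : H →L[ℂ] H) (hγtr : opTrace γ ≠ ⊤)
    {φ : H} (hφ : ‖φ‖ = 1) :
    (⟪φ, γ φ⟫_ℂ).re ≤ (opTrace γ).toReal := by
  have h := sum_re_le_opTrace γ hγtr (orthonormal_single hφ)
  simpa [Fin.sum_univ_one] using h

private lemma negPart_structure (γ : H →L[ℂ] H) (hγpos : γ.IsPositive) (hγtr : opTrace γ ≠ ⊤)
    (φ : H) (hφ : ‖φ‖ = 1) :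
    ∃ ψ : H, ∃ μ : ℝ, ‖ψ‖ = 1 ∧ 0 ≤ μ ∧
      (∀ x, (γ - projOp φ)⁻ x = ((μ : ℂ) * ⟪ψ, x⟫_ℂ) • ψ) ∧
      μ ≤ Real.sqrt (opTrace γ).toReal *
            Real.sqrt ((opTrace γ).toReal - (⟪φ, γ φ⟫_ℂ).re) +
          max (1 - (opTrace γ).toReal) 0 := by
  set T := (opTrace γ).toReal with hTdef
  set a := (⟪φ, γ φ⟫_ℂ).re with hadef
  have hγ0 : 0 ≤ γ := (ContinuousLinearMap.nonneg_iff_isPositive γ).2 hγpos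
  have hγsym := ContinuousLinearMap.isSelfAdjoint_iff_isSymmetric.1 hγpos.isSelfAdjoint
  have ha0 : 0 ≤ a := pos_inner_nonneg hγ0 φ
  have haT : a ≤ T := single_bound γ hγtr hφ
  have hT0 : 0 ≤ T := ENNReal.toReal_nonneg
  have hRHS0 : 0 ≤ Real.sqrt T * Real.sqrt (T - a) + max (1 - T) 0 :=
    add_nonneg (mul_nonneg (Real.sqrt_nonneg _) (Real.sqrt_nonneg _)) (le_max_right _ _)
  clear_value T a
  set A := γ - projOp φ with hAdef
  have hAsa : IsSelfAdjoint A := hγpos.isSelfAdjoint.sub (isSelfAdjoint_projOp φ)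
  have hAm0 : 0 ≤ A⁻ := CFC.negPart_nonneg A
  have hApm : A⁺ * A⁻ = 0 := CFC.posPart_mul_negPart A
  have hsub : A⁺ - A⁻ = A := CFC.posPart_sub_negPart A hAsa
  by_cases hz : A⁻ = 0
  · exact ⟨φ, 0, hφ, le_refl 0, fun x => by simp [hz], hRHS0⟩
  · obtain ⟨u₀, hu₀⟩ : ∃ u, A⁻ u ≠ 0 := by
      by_contra h
      push_neg at h
      exact hz (ContinuousLinearMap.ext fun u => by rw [h u]; rfl)
    have hAmsa : IsSelfAdjoint A⁻ :=
      ((ContinuousLinearMap.nonneg_iff_isPositive _).1 hAm0).isSelfAdjoint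
    have hAmsym := ContinuousLinearMap.isSelfAdjoint_iff_isSymmetric.1 hAmsa
    have happ : ∀ u, A u = γ u - projOp φ u := fun u => rfl
    have hAsplit : ∀ w, A w = A⁺ w - A⁻ w := fun w => by
      rw [← ContinuousLinearMap.sub_apply, hsub]
    have hApAm : ∀ u, A⁺ (A⁻ u) = 0 := by
      intro u
      have h1 : A⁺ (A⁻ u) = (A⁺ * A⁻) u := rfl
      rw [h1, hApm]
      rfl
    have hR : ∀ u, ⟪φ, A⁻ u⟫_ℂ = 0 → A⁻ u = 0 := by
      intro u hu
      have hPz : ⟪A⁻ u, projOp φ (A⁻ u)⟫_ℂ = 0 := by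
        rw [inner_projOp_self, hu]
        simp
      have hAz : A (A⁻ u) = A⁺ (A⁻ u) - A⁻ (A⁻ u) := hAsplit _
      have h1 : ⟪A⁻ u, A (A⁻ u)⟫_ℂ = ⟪A⁻ u, γ (A⁻ u)⟫_ℂ := by
        rw [happ (A⁻ u), inner_sub_right, hPz, sub_zero]
      have h3 : ⟪A⁻ u, A (A⁻ u)⟫_ℂ = -⟪A⁻ u, A⁻ (A⁻ u)⟫_ℂ := by
        rw [hAz, hApAm u, zero_sub, inner_neg_right]
      have h4 : (⟪A⁻ u, A⁻ (A⁻ u)⟫_ℂ).re = 0 := by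
        have h5 : 0 ≤ (⟪A⁻ u, γ (A⁻ u)⟫_ℂ).re := pos_inner_nonneg hγ0 _
        have h6 : 0 ≤ (⟪A⁻ u, A⁻ (A⁻ u)⟫_ℂ).re := pos_inner_nonneg hAm0 _
        have h7 : (⟪A⁻ u, A⁻ (A⁻ u)⟫_ℂ).re = -(⟪A⁻ u, γ (A⁻ u)⟫_ℂ).re := by
          rw [← h1, h3]
          simp
        linarith
      have h8 : A⁻ (A⁻ u) = 0 := apply_eq_zero_of_inner_zero hAm0 h4
      have h9 : ⟪A⁻ u, A⁻ u⟫_ℂ = 0 := by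
        have h10 := hAmsym u (A⁻ u)
        simp only [ContinuousLinearMap.coe_coe] at h10
        rw [h10, h8, inner_zero_right]
      exact inner_self_eq_zero.1 h9
    have hφv : ⟪φ, A⁻ u₀⟫_ℂ ≠ 0 := fun h => hu₀ (hR u₀ h)
    set v := A⁻ u₀ with hvdef
    have hv0 : v ≠ 0 := hu₀
    have hspan : ∀ u, ⟪φ, A⁻ u⟫_ℂ • v = ⟪φ, v⟫_ℂ • A⁻ u := by
      intro u
      have h1 : A⁻ (⟪φ, A⁻ u⟫_ℂ • u₀ - ⟪φ, v⟫_ℂ • u)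
          = ⟪φ, A⁻ u⟫_ℂ • v - ⟪φ, v⟫_ℂ • A⁻ u := by
        rw [ContinuousLinearMap.map_sub, ContinuousLinearMap.map_smul,
          ContinuousLinearMap.map_smul]
      have h2 : ⟪φ, A⁻ (⟪φ, A⁻ u⟫_ℂ • u₀ - ⟪φ, v⟫_ℂ • u)⟫_ℂ = 0 := by
        rw [h1, inner_sub_right, inner_smul_right, inner_smul_right]
        ring
      have h3 := hR _ h2
      rw [h1] at h3
      exact sub_eq_zero.1 h3
    set ψ := ((‖v‖⁻¹ : ℝ) : ℂ) • v with hψdef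
    have hvn : (‖v‖ : ℝ) ≠ 0 := norm_ne_zero_iff.2 hv0
    have hψn : ‖ψ‖ = 1 := by
      rw [hψdef, norm_smul]
      simp [abs_of_nonneg (inv_nonneg.2 (norm_nonneg v)), inv_mul_cancel₀ hvn]
    have hψψ : ⟪ψ, ψ⟫_ℂ = 1 := by
      rw [inner_self_eq_norm_sq_to_K, hψn]
      norm_num
    have hrange : ∀ u, ∃ t : ℂ, A⁻ u = t • v := by
      intro u
      refine ⟨(⟪φ, v⟫_ℂ)⁻¹ * ⟪φ, A⁻ u⟫_ℂ, ?_⟩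
      rw [mul_smul, hspan u, smul_smul, inv_mul_cancel₀ hφv, one_smul]
    have hrep : ∀ x, A⁻ x = ⟪ψ, A⁻ x⟫_ℂ • ψ := by
      intro x
      obtain ⟨t, ht⟩ := hrange x
      rw [ht]
      have hvC : (‖v‖ : ℂ) ≠ 0 := by exact_mod_cast hvn
      have hψv : ⟪ψ, v⟫_ℂ = (‖v‖ : ℂ) := by
        rw [hψdef, inner_smul_left, Complex.conj_ofReal, inner_self_eq_norm_sq_to_K]
        push_cast
        field_simp
        rfl
      rw [inner_smul_right, hψv, hψdef, smul_smul]
      congr 1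
      push_cast
      field_simp
    set μ := (⟪ψ, A⁻ ψ⟫_ℂ).re with hμdef
    have hμ0 : 0 ≤ μ := pos_inner_nonneg hAm0 ψ
    have hc : ⟪ψ, A⁻ ψ⟫_ℂ = ((μ : ℝ) : ℂ) := by
      have h1 : (starRingEnd ℂ) ⟪ψ, A⁻ ψ⟫_ℂ = ⟪ψ, A⁻ ψ⟫_ℂ := by
        rw [← inner_conj_symm]
        simp only [inner_conj_symm]
        exact (hAmsym ψ ψ)
      exact (Complex.conj_eq_iff_re.1 h1).symm
    have hform : ∀ x, A⁻ x = ((μ : ℂ) * ⟪ψ, x⟫_ℂ) • ψ := by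
      intro x
      rw [hrep x]
      congr 1
      have h1 : ⟪ψ, A⁻ x⟫_ℂ = ⟪A⁻ ψ, x⟫_ℂ := (hAmsym ψ x).symm
      rw [h1, hrep ψ, ← hc]
      rw [hc, inner_smul_left, Complex.conj_ofReal]
    have hApψ : A⁺ ψ = 0 := by
      rw [hψdef, ContinuousLinearMap.map_smul]
      conv_lhs => rw [hvdef]
      rw [hApAm u₀, smul_zero]
    have hAψre : -μ = (⟪ψ, γ ψ⟫_ℂ).re - ‖⟪φ, ψ⟫_ℂ‖^2 := by
      have hAψ : A ψ = -((μ : ℂ) • ψ) := by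
        have h1 : A ψ = A⁺ ψ - A⁻ ψ := hAsplit _
        rw [h1, hApψ, hform ψ, hψψ, mul_one, zero_sub]
      have h2 : ⟪ψ, A ψ⟫_ℂ = -(μ : ℂ) := by
        rw [hAψ, inner_neg_right, inner_smul_right, hψψ, mul_one]
      have h3 : ⟪ψ, A ψ⟫_ℂ = ⟪ψ, γ ψ⟫_ℂ - ⟪ψ, projOp φ ψ⟫_ℂ := by
        rw [happ ψ, inner_sub_right]
      have h4 : (⟪ψ, projOp φ ψ⟫_ℂ).re = ‖⟪φ, ψ⟫_ℂ‖^2 := by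
        rw [inner_projOp_self]
        exact Complex.ofReal_re _
      have h5 := congrArg Complex.re h2
      rw [h3] at h5
      simp only [Complex.sub_re, Complex.neg_re, Complex.ofReal_re] at h5
      rw [h4] at h5
      linarith
    -- now the scalar estimate
    refine ⟨ψ, μ, hψn, hμ0, hform, ?_⟩
    clear_value μ ψ v
    obtain ⟨w, hwdef⟩ : ∃ w, w = ψ - ⟪φ, ψ⟫_ℂ • φ := ⟨_, rfl⟩
    have hφφ : ⟪φ, φ⟫_ℂ = 1 := by
      rw [inner_self_eq_norm_sq_to_K, hφ]
      norm_num
    have hφw : ⟪φ, w⟫_ℂ = 0 := by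
      rw [hwdef, inner_sub_right, inner_smul_right, hφφ, mul_one, sub_self]
    have hψdecomp : ψ = ⟪φ, ψ⟫_ℂ • φ + w := by rw [hwdef]; abel
    have hx0 : (0:ℝ) ≤ ‖⟪φ, ψ⟫_ℂ‖ := norm_nonneg _
    have hy0 : (0:ℝ) ≤ ‖w‖ := norm_nonneg _
    have hwφ : ⟪w, φ⟫_ℂ = 0 := by rw [← inner_conj_symm w φ, hφw, map_zero]
    have hww : ⟪w, w⟫_ℂ = ((‖w‖^2 : ℝ) : ℂ) := by
      rw [inner_self_eq_norm_sq_to_K]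
      norm_cast
    have hxy : ‖⟪φ, ψ⟫_ℂ‖^2 + ‖w‖^2 = 1 := by
      have h1 : (1 : ℂ) = ((‖⟪φ, ψ⟫_ℂ‖^2 : ℝ) : ℂ) + ((‖w‖^2 : ℝ) : ℂ) := by
        rw [← hψψ]
        conv_lhs => rw [hψdecomp]
        simp only [inner_add_left, inner_add_right, inner_smul_left, inner_smul_right,
          hφφ, hφw, hwφ, hww, mul_one, mul_zero, zero_add, add_zero]
        rw [RCLike.mul_conj]
        norm_cast
        exact (Complex.ofReal_add _ _).symm
      have h2 : (1 : ℝ) = ‖⟪φ, ψ⟫_ℂ‖^2 + ‖w‖^2 := by exact_mod_cast h1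
      linarith
    have hwγ0 : 0 ≤ (⟪w, γ w⟫_ℂ).re := pos_inner_nonneg hγ0 w
    have hwb : (⟪w, γ w⟫_ℂ).re ≤ ‖w‖^2 * (T - a) := by
      rcases eq_or_ne w 0 with hw0 | hw0
      · rw [hw0]
        simp
      · have hwn : ‖w‖ ≠ 0 := norm_ne_zero_iff.2 hw0
        obtain ⟨χ, hχdef⟩ : ∃ χ : H, χ = ((‖w‖⁻¹ : ℝ) : ℂ) • w := ⟨_, rfl⟩
        have hχn : ‖χ‖ = 1 := by
          rw [hχdef, norm_smul]
          simp [abs_of_nonneg (inv_nonneg.2 (norm_nonneg w)), inv_mul_cancel₀ hwn]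
        have hφχ : ⟪φ, χ⟫_ℂ = 0 := by
          rw [hχdef, inner_smul_right, hφw, mul_zero]
        have hp := pair_bound γ hγtr hφ hχn hφχ
        rw [← hTdef, ← hadef] at hp
        have hwχ : w = ((‖w‖ : ℝ) : ℂ) • χ := by
          rw [hχdef, smul_smul, ← Complex.ofReal_mul, mul_inv_cancel₀ hwn]
          simp
        have h3 : ⟪w, γ w⟫_ℂ = ((‖w‖^2 : ℝ) : ℂ) * ⟪χ, γ χ⟫_ℂ := by
          conv_lhs => rw [hwχ]
          rw [ContinuousLinearMap.map_smul, inner_smul_left, inner_smul_right,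
            Complex.conj_ofReal, ← mul_assoc, ← Complex.ofReal_mul]
          push_cast
          ring
        have hre : (⟪w, γ w⟫_ℂ).re = ‖w‖^2 * (⟪χ, γ χ⟫_ℂ).re := by
          rw [h3, Complex.re_ofReal_mul]
        rw [hre]
        have h2 : (⟪χ, γ χ⟫_ℂ).re ≤ T - a := by linarith [hp]
        exact mul_le_mul_of_nonneg_left h2 (sq_nonneg ‖w‖)
    have hu_le : Real.sqrt ((⟪w, γ w⟫_ℂ).re) ≤ ‖w‖ * Real.sqrt (T - a) := by
      have h1 := Real.sqrt_le_sqrt hwb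
      rwa [Real.sqrt_mul (sq_nonneg ‖w‖), Real.sqrt_sq hy0] at h1
    have hcross : ‖⟪φ, γ w⟫_ℂ‖ ≤ Real.sqrt a * Real.sqrt ((⟪w, γ w⟫_ℂ).re) := by
      rw [hadef]
      exact cs_pos hγ0 φ w
    obtain ⟨z, hzdef⟩ : ∃ z : ℂ, z = (starRingEnd ℂ) ⟪φ, ψ⟫_ℂ * ⟪φ, γ w⟫_ℂ := ⟨_, rfl⟩
    have e1 : ⟪⟪φ, ψ⟫_ℂ • φ, γ (⟪φ, ψ⟫_ℂ • φ)⟫_ℂ = ((‖⟪φ, ψ⟫_ℂ‖^2 : ℝ) : ℂ) * ⟪φ, γ φ⟫_ℂ := by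
      rw [ContinuousLinearMap.map_smul, inner_smul_left, inner_smul_right, ← mul_assoc]
      congr 1
      rw [mul_comm ((starRingEnd ℂ) ⟪φ, ψ⟫_ℂ) ⟪φ, ψ⟫_ℂ, RCLike.mul_conj]
      norm_cast
    have e2 : ⟪⟪φ, ψ⟫_ℂ • φ, γ w⟫_ℂ = z := by
      rw [inner_smul_left, hzdef]
    have e3 : ⟪w, γ (⟪φ, ψ⟫_ℂ • φ)⟫_ℂ = (starRingEnd ℂ) z := by
      have h1 : ⟪γ φ, w⟫_ℂ = ⟪φ, γ w⟫_ℂ := by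
        have h2 := hγsym φ w
        simpa using h2
      rw [ContinuousLinearMap.map_smul, inner_smul_right]
      rw [← inner_conj_symm w (γ φ), h1, hzdef, map_mul, Complex.conj_conj]
    have hexp : ⟪ψ, γ ψ⟫_ℂ
        = ((‖⟪φ, ψ⟫_ℂ‖^2 : ℝ) : ℂ) * ⟪φ, γ φ⟫_ℂ + (z + (starRingEnd ℂ) z) + ⟪w, γ w⟫_ℂ := by
      conv_lhs => rw [hψdecomp]
      rw [ContinuousLinearMap.map_add, inner_add_left, inner_add_right, inner_add_right,
        e1, e2, e3]
      ring
    have hrepart : (⟪ψ, γ ψ⟫_ℂ).re = ‖⟪φ, ψ⟫_ℂ‖^2 * a + 2 * z.re + (⟪w, γ w⟫_ℂ).re := by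
      rw [hexp]
      simp only [Complex.add_re, Complex.re_ofReal_mul, Complex.conj_re]
      rw [hadef]
      ring
    have hznorm : ‖z‖ ≤ ‖⟪φ, ψ⟫_ℂ‖ * (Real.sqrt a * Real.sqrt ((⟪w, γ w⟫_ℂ).re)) := by
      rw [hzdef, norm_mul]
      have h1 : ‖(starRingEnd ℂ) ⟪φ, ψ⟫_ℂ‖ = ‖⟪φ, ψ⟫_ℂ‖ := RCLike.norm_conj _
      rw [h1]
      exact mul_le_mul_of_nonneg_left hcross hx0
    have hzre : -(‖⟪φ, ψ⟫_ℂ‖ * (Real.sqrt a * Real.sqrt ((⟪w, γ w⟫_ℂ).re))) ≤ z.re := by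
      have h1 : |z.re| ≤ ‖z‖ := Complex.abs_re_le_norm z
      have h2 : -z.re ≤ |z.re| := neg_le_abs z.re
      linarith [hznorm]
    have hμx : μ ≤ ‖⟪φ, ψ⟫_ℂ‖^2
        - (‖⟪φ, ψ⟫_ℂ‖ * Real.sqrt a - Real.sqrt ((⟪w, γ w⟫_ℂ).re))^2 := by
      have h1 : μ = ‖⟪φ, ψ⟫_ℂ‖^2 - (⟪ψ, γ ψ⟫_ℂ).re := by linarith [hAψre]
      have hs2 : (Real.sqrt a)^2 = a := Real.sq_sqrt ha0
      have hu2 : (Real.sqrt ((⟪w, γ w⟫_ℂ).re))^2 = (⟪w, γ w⟫_ℂ).re := Real.sq_sqrt hwγ0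
      have expand : (‖⟪φ, ψ⟫_ℂ‖ * Real.sqrt a - Real.sqrt ((⟪w, γ w⟫_ℂ).re))^2
          = ‖⟪φ, ψ⟫_ℂ‖^2 * (Real.sqrt a)^2
            - 2*(‖⟪φ, ψ⟫_ℂ‖ * (Real.sqrt a * Real.sqrt ((⟪w, γ w⟫_ℂ).re)))
            + (Real.sqrt ((⟪w, γ w⟫_ℂ).re))^2 := by ring
      have hsub2 : (‖⟪φ, ψ⟫_ℂ‖ * Real.sqrt a - Real.sqrt ((⟪w, γ w⟫_ℂ).re))^2
          ≤ (⟪ψ, γ ψ⟫_ℂ).re := by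
        rw [expand, hs2, hu2, hrepart]
        linarith [hzre]
      linarith [h1, hsub2]
    have hsrq : (Real.sqrt a)^2 + (Real.sqrt (T - a))^2 = (Real.sqrt T)^2 := by
      rw [Real.sq_sqrt ha0, Real.sq_sqrt (sub_nonneg.2 haT), Real.sq_sqrt hT0]
      ring
    have hfinal := scalar_mu_bound hx0 hy0 (Real.sqrt_nonneg ((⟪w, γ w⟫_ℂ).re))
      (Real.sqrt_nonneg a) (Real.sqrt_nonneg (T - a)) (Real.sqrt_nonneg T)
      hxy hsrq hu_le
    have hq2 : (Real.sqrt T)^2 = T := Real.sq_sqrt hT0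
    rw [hq2] at hfinal
    linarith [hμx, hfinal]


private lemma re_inner_projOp (φ x : H) : (⟪x, projOp φ x⟫_ℂ).re = ‖⟪φ, x⟫_ℂ‖^2 := by
  rw [inner_projOp_self]
  exact Complex.ofReal_re _

private lemma re_inner_negPart_diag (μ : ℝ) (ψ x : H) :
    ((μ : ℂ) * ⟪ψ, x⟫_ℂ * ⟪x, ψ⟫_ℂ).re = μ * ‖⟪ψ, x⟫_ℂ‖^2 := by
  rw [← inner_conj_symm x ψ, mul_assoc, Complex.mul_conj, ← Complex.ofReal_mul,
    Complex.ofReal_re, Complex.normSq_eq_norm_sq]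

private lemma sum_posPart_le (γ : H →L[ℂ] H) (hγpos : γ.IsPositive) (hγtr : opTrace γ ≠ ⊤)
    (φ : H) (hφ : ‖φ‖ = 1) {ψ : H} {μ : ℝ} (hψn : ‖ψ‖ = 1) (hμ0 : 0 ≤ μ)
    (hform : ∀ x, (γ - projOp φ)⁻ x = ((μ : ℂ) * ⟪ψ, x⟫_ℂ) • ψ)
    {n : ℕ} {e : Fin n → H} (he : Orthonormal ℂ e) :
    ∑ i, (⟪e i, (γ - projOp φ)⁺ (e i)⟫_ℂ).re ≤ ((opTrace γ).toReal - 1) + μ := by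
  have hφφ : ⟪φ, φ⟫_ℂ = 1 := by
    rw [inner_self_eq_norm_sq_to_K, hφ]
    norm_num
  have hAsa : IsSelfAdjoint (γ - projOp φ) := hγpos.isSelfAdjoint.sub (isSelfAdjoint_projOp φ)
  have hApAmA : (γ - projOp φ)⁺ = (γ - projOp φ) + (γ - projOp φ)⁻ :=
    sub_eq_iff_eq_add.1 (CFC.posPart_sub_negPart _ hAsa)
  have hdiag : ∀ x : H, (⟪x, (γ - projOp φ)⁺ x⟫_ℂ).re
      = (⟪x, γ x⟫_ℂ).re - ‖⟪φ, x⟫_ℂ‖^2 + μ * ‖⟪ψ, x⟫_ℂ‖^2 := by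
    intro x
    rw [hApAmA, ContinuousLinearMap.add_apply, inner_add_right,
      ContinuousLinearMap.sub_apply, inner_sub_right, hform x, inner_smul_right]
    simp only [Complex.add_re, Complex.sub_re]
    rw [re_inner_projOp, re_inner_negPart_diag]
  have key : ∀ (m : ℕ) (g : Fin m → H), Orthonormal ℂ g →
      (1:ℝ) ≤ ∑ i, ‖⟪φ, g i⟫_ℂ‖^2 →
      ∑ i, (⟪g i, (γ - projOp φ)⁺ (g i)⟫_ℂ).re ≤ ((opTrace γ).toReal - 1) + μ := by
    intro m g hg hp
    have hsum : ∑ i, (⟪g i, (γ - projOp φ)⁺ (g i)⟫_ℂ).re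
        = (∑ i, (⟪g i, γ (g i)⟫_ℂ).re) - (∑ i, ‖⟪φ, g i⟫_ℂ‖^2)
          + μ * ∑ i, ‖⟪ψ, g i⟫_ℂ‖^2 := by
      simp only [hdiag]
      rw [Finset.sum_add_distrib, Finset.sum_sub_distrib, Finset.mul_sum]
    have h1 : ∑ i, (⟪g i, γ (g i)⟫_ℂ).re ≤ (opTrace γ).toReal :=
      sum_re_le_opTrace γ hγtr hg
    have h2 : ∑ i, ‖⟪ψ, g i⟫_ℂ‖^2 ≤ 1 := by
      have h3 : ∀ i : Fin m, ‖⟪ψ, g i⟫_ℂ‖^2 = ‖⟪g i, ψ⟫_ℂ‖^2 := fun i => by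
        rw [norm_inner_symm]
      simp only [h3]
      have h4 := hg.sum_inner_products_le (x := ψ) (s := Finset.univ)
      rw [hψn, one_pow] at h4
      exact h4
    have h5 : 0 ≤ ∑ i, ‖⟪ψ, g i⟫_ℂ‖^2 :=
      Finset.sum_nonneg fun i _ => sq_nonneg _
    have hμsum : μ * ∑ i, ‖⟪ψ, g i⟫_ℂ‖^2 ≤ μ := by
      calc μ * ∑ i, ‖⟪ψ, g i⟫_ℂ‖^2 ≤ μ * 1 := mul_le_mul_of_nonneg_left h2 hμ0
      _ = μ := mul_one μ
    rw [hsum]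
    linarith [h1, hp, hμsum]
  obtain ⟨φ', hφ'def⟩ : ∃ φ', φ' = φ - ∑ j, ⟪e j, φ⟫_ℂ • e j := ⟨_, rfl⟩
  have hφ'inner : ∀ j, ⟪e j, φ'⟫_ℂ = 0 := by
    intro j
    rw [hφ'def, inner_sub_right, he.inner_right_fintype, sub_self]
  have hsumφ : ⟪φ, ∑ j, ⟪e j, φ⟫_ℂ • e j⟫_ℂ = ((∑ j, ‖⟪e j, φ⟫_ℂ‖^2 : ℝ) : ℂ) := by
    rw [inner_sum]
    push_cast
    refine Finset.sum_congr rfl fun j _ => ?_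
    rw [inner_smul_right, ← inner_conj_symm φ (e j), Complex.mul_conj, Complex.normSq_eq_norm_sq]
    simp
  have hφφ' : ⟪φ, φ'⟫_ℂ = ((1 - ∑ j, ‖⟪e j, φ⟫_ℂ‖^2 : ℝ) : ℂ) := by
    rw [hφ'def, inner_sub_right, hφφ, hsumφ]
    push_cast
    ring
  have hφ'φ' : ⟪φ', φ'⟫_ℂ = ((1 - ∑ j, ‖⟪e j, φ⟫_ℂ‖^2 : ℝ) : ℂ) := by
    nth_rewrite 1 [hφ'def]
    rw [inner_sub_left, hφφ', sum_inner]
    have hz : ∀ j : Fin n, ⟪⟪e j, φ⟫_ℂ • e j, φ'⟫_ℂ = 0 := fun j => by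
      rw [inner_smul_left, hφ'inner j, mul_zero]
    simp only [hz, Finset.sum_const_zero, sub_zero]
  rcases eq_or_ne φ' 0 with h0 | h0
  · -- p = 1 exactly
    have hp1 : (1:ℝ) ≤ ∑ j, ‖⟪e j, φ⟫_ℂ‖^2 := by
      rw [h0] at hφφ'
      rw [inner_zero_right] at hφφ'
      have : (1 - ∑ j, ‖⟪e j, φ⟫_ℂ‖^2 : ℝ) = 0 := by exact_mod_cast hφφ'.symm
      linarith
    have h4 : ∀ j : Fin n, ‖⟪φ, e j⟫_ℂ‖^2 = ‖⟪e j, φ⟫_ℂ‖^2 := fun j => by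
      rw [norm_inner_symm]
    refine key n e he ?_
    simp only [h4]
    exact hp1
  · have hn0 : ‖φ'‖ ≠ 0 := norm_ne_zero_iff.2 h0
    have hnorm2 : ‖φ'‖^2 = 1 - ∑ j, ‖⟪e j, φ⟫_ℂ‖^2 := by
      have h1 : ⟪φ', φ'⟫_ℂ = ((‖φ'‖^2 : ℝ) : ℂ) := by
        rw [inner_self_eq_norm_sq_to_K]
        norm_cast
      rw [h1] at hφ'φ'
      exact_mod_cast hφ'φ'
    obtain ⟨e', he'def⟩ : ∃ e' : H, e' = ((‖φ'‖⁻¹ : ℝ) : ℂ) • φ' := ⟨_, rfl⟩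
    have he'n : ‖e'‖ = 1 := by
      rw [he'def, norm_smul]
      simp [abs_of_nonneg (inv_nonneg.2 (norm_nonneg φ')), inv_mul_cancel₀ hn0]
    have hee' : ∀ j, ⟪e j, e'⟫_ℂ = 0 := fun j => by
      rw [he'def, inner_smul_right, hφ'inner j, mul_zero]
    have hsnoc : Orthonormal ℂ (Fin.snoc e e') := orthonormal_snoc he he'n hee'
    have hφe' : ‖⟪φ, e'⟫_ℂ‖^2 = 1 - ∑ j, ‖⟪e j, φ⟫_ℂ‖^2 := by
      rw [he'def, inner_smul_right, hφφ', ← hnorm2]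
      rw [norm_mul]
      have h2 : ‖((‖φ'‖⁻¹ : ℝ) : ℂ)‖ = ‖φ'‖⁻¹ := by
        rw [Complex.norm_real]
        exact abs_of_nonneg (inv_nonneg.2 (norm_nonneg φ'))
      have h3 : ‖((‖φ'‖^2 : ℝ) : ℂ)‖ = ‖φ'‖^2 := by
        rw [Complex.norm_real]
        exact abs_of_nonneg (sq_nonneg _)
      rw [h2, h3]
      field_simp
    have hp1 : (1:ℝ) ≤ ∑ i, ‖⟪φ, (Fin.snoc e e' : Fin (n+1) → H) i⟫_ℂ‖^2 := by
      rw [Fin.sum_univ_castSucc]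
      simp only [Fin.snoc_castSucc, Fin.snoc_last]
      have h4 : ∀ j : Fin n, ‖⟪φ, e j⟫_ℂ‖^2 = ‖⟪e j, φ⟫_ℂ‖^2 := fun j => by
        rw [norm_inner_symm]
      simp only [h4]
      rw [hφe']
      linarith
    have hmono : ∑ i, (⟪e i, (γ - projOp φ)⁺ (e i)⟫_ℂ).re
        ≤ ∑ i, (⟪(Fin.snoc e e' : Fin (n+1) → H) i, (γ - projOp φ)⁺ ((Fin.snoc e e' : Fin (n+1) → H) i)⟫_ℂ).re := by
      rw [Fin.sum_univ_castSucc]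
      simp only [Fin.snoc_castSucc, Fin.snoc_last]
      have h5 : 0 ≤ (⟪e', (γ - projOp φ)⁺ e'⟫_ℂ).re :=
        pos_inner_nonneg (CFC.posPart_nonneg (γ - projOp φ)) e'
      linarith
    exact hmono.trans (key (n+1) (Fin.snoc e e') hsnoc hp1)


private lemma main_sum_bound (γ : H →L[ℂ] H) (hγpos : γ.IsPositive) (hγtr : opTrace γ ≠ ⊤)
    (φ : H) (hφ : ‖φ‖ = 1) {n : ℕ} {e f : Fin n → H}
    (he : Orthonormal ℂ e) (hf : Orthonormal ℂ f) :
    ∑ i, ‖⟪e i, (γ - projOp φ) (f i)⟫_ℂ‖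
      ≤ 2 * Real.sqrt (opTrace γ).toReal *
          Real.sqrt ((opTrace γ).toReal - (⟪φ, γ φ⟫_ℂ).re)
        + |(opTrace γ).toReal - 1| := by
  obtain ⟨ψ, μ, hψn, hμ0, hform, hμle⟩ := negPart_structure γ hγpos hγtr φ hφ
  have hAsa : IsSelfAdjoint (γ - projOp φ) := hγpos.isSelfAdjoint.sub (isSelfAdjoint_projOp φ)
  have hptw : ∀ i : Fin n, ‖⟪e i, (γ - projOp φ) (f i)⟫_ℂ‖
      ≤ ‖⟪e i, (γ - projOp φ)⁺ (f i)⟫_ℂ‖ + ‖⟪e i, (γ - projOp φ)⁻ (f i)⟫_ℂ‖ := by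
    intro i
    have h1 : (γ - projOp φ) (f i) = (γ - projOp φ)⁺ (f i) - (γ - projOp φ)⁻ (f i) := by
      rw [← ContinuousLinearMap.sub_apply, CFC.posPart_sub_negPart _ hAsa]
    rw [h1, inner_sub_right]
    exact norm_sub_le _ _
  have hS : ∑ i, ‖⟪e i, (γ - projOp φ) (f i)⟫_ℂ‖
      ≤ (∑ i, ‖⟪e i, (γ - projOp φ)⁺ (f i)⟫_ℂ‖)
        + ∑ i, ‖⟪e i, (γ - projOp φ)⁻ (f i)⟫_ℂ‖ := by
    rw [← Finset.sum_add_distrib]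
    exact Finset.sum_le_sum fun i _ => hptw i
  have hAmpart : ∑ i, ‖⟪e i, (γ - projOp φ)⁻ (f i)⟫_ℂ‖ ≤ μ := by
    have h1 : ∀ i : Fin n, ‖⟪e i, (γ - projOp φ)⁻ (f i)⟫_ℂ‖
        = μ * (‖⟪ψ, f i⟫_ℂ‖ * ‖⟪e i, ψ⟫_ℂ‖) := by
      intro i
      rw [hform (f i), inner_smul_right, norm_mul, norm_mul]
      rw [Complex.norm_real, Real.norm_eq_abs, abs_of_nonneg hμ0]
      ring
    simp only [h1]
    rw [← Finset.mul_sum]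
    have h2 : ∑ i, ‖⟪ψ, f i⟫_ℂ‖ * ‖⟪e i, ψ⟫_ℂ‖ ≤ 1 := by
      have h3 := Finset.sum_mul_sq_le_sq_mul_sq Finset.univ
        (fun i => ‖⟪ψ, f i⟫_ℂ‖) (fun i => ‖⟪e i, ψ⟫_ℂ‖)
      have h4 : ∑ i, ‖⟪ψ, f i⟫_ℂ‖^2 ≤ 1 := by
        have h5 : ∀ i : Fin n, ‖⟪ψ, f i⟫_ℂ‖^2 = ‖⟪f i, ψ⟫_ℂ‖^2 := fun i => by
          rw [norm_inner_symm]
        simp only [h5]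
        have h6 := hf.sum_inner_products_le (x := ψ) (s := Finset.univ)
        rw [hψn, one_pow] at h6
        exact h6
      have h7 : ∑ i, ‖⟪e i, ψ⟫_ℂ‖^2 ≤ 1 := by
        have h8 := he.sum_inner_products_le (x := ψ) (s := Finset.univ)
        rw [hψn, one_pow] at h8
        exact h8
      have h9 : 0 ≤ ∑ i, ‖⟪ψ, f i⟫_ℂ‖ * ‖⟪e i, ψ⟫_ℂ‖ :=
        Finset.sum_nonneg fun i _ => mul_nonneg (norm_nonneg _) (norm_nonneg _)
      have h10 : 0 ≤ ∑ i, ‖⟪ψ, f i⟫_ℂ‖^2 :=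
        Finset.sum_nonneg fun i _ => sq_nonneg _
      have h11 : 0 ≤ ∑ i, ‖⟪e i, ψ⟫_ℂ‖^2 :=
        Finset.sum_nonneg fun i _ => sq_nonneg _
      nlinarith [h3, h4, h7, h9, h10, h11]
    calc μ * ∑ i, ‖⟪ψ, f i⟫_ℂ‖ * ‖⟪e i, ψ⟫_ℂ‖ ≤ μ * 1 :=
        mul_le_mul_of_nonneg_left h2 hμ0
    _ = μ := mul_one μ
  have hApos : (0 : H →L[ℂ] H) ≤ (γ - projOp φ)⁺ := CFC.posPart_nonneg _
  have hAppart : ∑ i, ‖⟪e i, (γ - projOp φ)⁺ (f i)⟫_ℂ‖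
      ≤ max (((opTrace γ).toReal - 1) + μ) 0 := by
    have h1 := cs_pos_sum hApos e f
    have h2 : ∑ i, (⟪e i, (γ - projOp φ)⁺ (e i)⟫_ℂ).re
        ≤ ((opTrace γ).toReal - 1) + μ :=
      sum_posPart_le γ hγpos hγtr φ hφ hψn hμ0 hform he
    have h3 : ∑ i, (⟪f i, (γ - projOp φ)⁺ (f i)⟫_ℂ).re
        ≤ ((opTrace γ).toReal - 1) + μ :=
      sum_posPart_le γ hγpos hγtr φ hφ hψn hμ0 hform hf
    have h4 : Real.sqrt (∑ i, (⟪e i, (γ - projOp φ)⁺ (e i)⟫_ℂ).re)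
        ≤ Real.sqrt (max (((opTrace γ).toReal - 1) + μ) 0) :=
      Real.sqrt_le_sqrt (h2.trans (le_max_left _ _))
    have h5 : Real.sqrt (∑ i, (⟪f i, (γ - projOp φ)⁺ (f i)⟫_ℂ).re)
        ≤ Real.sqrt (max (((opTrace γ).toReal - 1) + μ) 0) :=
      Real.sqrt_le_sqrt (h3.trans (le_max_left _ _))
    refine h1.trans ?_
    calc Real.sqrt (∑ i, (⟪e i, (γ - projOp φ)⁺ (e i)⟫_ℂ).re)
          * Real.sqrt (∑ i, (⟪f i, (γ - projOp φ)⁺ (f i)⟫_ℂ).re)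
        ≤ Real.sqrt (max (((opTrace γ).toReal - 1) + μ) 0)
          * Real.sqrt (max (((opTrace γ).toReal - 1) + μ) 0) :=
          mul_le_mul h4 h5 (Real.sqrt_nonneg _) (Real.sqrt_nonneg _)
    _ = max (((opTrace γ).toReal - 1) + μ) 0 := Real.mul_self_sqrt (le_max_right _ _)
  have hQ0 : 0 ≤ Real.sqrt (opTrace γ).toReal *
      Real.sqrt ((opTrace γ).toReal - (⟪φ, γ φ⟫_ℂ).re) :=
    mul_nonneg (Real.sqrt_nonneg _) (Real.sqrt_nonneg _)
  have hfc := final_combine hQ0 hμ0 hμle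
  linarith [hS, hAmpart, hAppart, hfc]


/-- For a nonnegative trace-class `γ` and a unit vector `φ`,
`‖γ - |φ⟩⟨φ|‖₁ ≤ 2√(Tr γ)√(Tr γ - ⟨φ,γφ⟩) + |Tr γ - 1|`; in particular if `Tr γ = 1` then
`‖γ - |φ⟩⟨φ|‖₁ ≤ 2√(1 - ⟨φ,γφ⟩)`. -/
theorem trace_norm_bound_near_projection
    (γ : H →L[ℂ] H) (hγpos : γ.IsPositive) (hγtr : opTrace γ ≠ ⊤)
    (φ : H) (hφ : ‖φ‖ = 1) :
    traceNorm (γ - projOp φ)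
        ≤ ENNReal.ofReal
          (2 * Real.sqrt ((opTrace γ).toReal)
              * Real.sqrt ((opTrace γ).toReal - (⟪φ, γ φ⟫_ℂ).re)
            + |(opTrace γ).toReal - 1|) ∧
      (opTrace γ = 1 →
        traceNorm (γ - projOp φ)
          ≤ ENNReal.ofReal (2 * Real.sqrt (1 - (⟪φ, γ φ⟫_ℂ).re))) := by
  have key : traceNorm (γ - projOp φ)
      ≤ ENNReal.ofReal
        (2 * Real.sqrt ((opTrace γ).toReal)
            * Real.sqrt ((opTrace γ).toReal - (⟪φ, γ φ⟫_ℂ).re)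
          + |(opTrace γ).toReal - 1|) := by
    rw [traceNorm]
    refine iSup_le fun n => iSup_le fun e => iSup_le fun f =>
      iSup_le fun he => iSup_le fun hf => ?_
    exact ENNReal.ofReal_le_ofReal (main_sum_bound γ hγpos hγtr φ hφ he hf)
  refine ⟨key, fun h1 => ?_⟩
  have hT1 : (opTrace γ).toReal = 1 := by rw [h1]; exact ENNReal.toReal_one
  rw [hT1] at key
  have h2 : 2 * Real.sqrt 1 * Real.sqrt (1 - (⟪φ, γ φ⟫_ℂ).re) + |(1:ℝ) - 1|
      = 2 * Real.sqrt (1 - (⟪φ, γ φ⟫_ℂ).re) := by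
    rw [Real.sqrt_one]
    norm_num
  rw [h2] at key
  exact key


end
end
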